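/- Define W(x) = ∏_{k=0}^∞ ( (2k+1)(2x+2k+2) ) / ( (2k+2)(2x+2k+1) ) for real x > −1/2, which interpolates the products (1/2)(3/4)⋯((2m−1)/(2m)). Then W(0) = 1 and W has derivative −2·log 2 at x = 0. -/

import Mathlib

open Real Filter Finset Topology

noncomputable def Wterm (k : ℕ) (x : ℝ) : ℝ :=
  ((2 * k + 1) * (2 * x + 2 * k + 2)) / ((2 * k + 2) * (2 * x + 2 * k + 1))

lemma denom1_pos {k : ℕ} {x : ℝ} (hx : x ∈ Set.Ioo (-(1/4) : ℝ) (1/4)) :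
    0 < 2 * x + 2 * k + 1 := by
  have := hx.1
  have : (0:ℝ) ≤ (k:ℝ) := Nat.cast_nonneg k
  nlinarith [hx.1]

lemma denom2_pos {k : ℕ} {x : ℝ} (hx : x ∈ Set.Ioo (-(1/4) : ℝ) (1/4)) :
    0 < 2 * x + 2 * k + 2 := by
  have := denom1_pos (k := k) hx; linarith

lemma Wterm_pos {k : ℕ} {x : ℝ} (hx : x ∈ Set.Ioo (-(1/4) : ℝ) (1/4)) :
    0 < Wterm k x := by
  have h1 := denom1_pos (k := k) hx
  have h2 := denom2_pos (k := k) hx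
  have hk : (0:ℝ) ≤ (k:ℝ) := Nat.cast_nonneg k
  apply div_pos <;> positivity

lemma hasDerivAt_log_Wterm {k : ℕ} {x : ℝ} (hx : x ∈ Set.Ioo (-(1/4) : ℝ) (1/4)) :
    HasDerivAt (fun y => Real.log (Wterm k y))
      (-2 / ((2 * x + 2 * k + 1) * (2 * x + 2 * k + 2))) x := by
  have h1 := denom1_pos (k := k) hx
  have h2 := denom2_pos (k := k) hx
  have hk : (0:ℝ) ≤ (k:ℝ) := Nat.cast_nonneg k
  have hlin : HasDerivAt (fun y : ℝ => 2 * y) 2 x := by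
    simpa using (hasDerivAt_id x).const_mul (2 : ℝ)
  have hN : HasDerivAt (fun y : ℝ => (2 * (k:ℝ) + 1) * (2 * y + 2 * k + 2))
      ((2 * (k:ℝ) + 1) * 2) x := by
    exact (((hlin.add_const (2 * (k:ℝ))).add_const 2).const_mul _)
  have hD : HasDerivAt (fun y : ℝ => (2 * (k:ℝ) + 2) * (2 * y + 2 * k + 1))
      ((2 * (k:ℝ) + 2) * 2) x := by
    exact (((hlin.add_const (2 * (k:ℝ))).add_const 1).const_mul _)
  have hDne : (2 * (k:ℝ) + 2) * (2 * x + 2 * k + 1) ≠ 0 := by positivity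
  have hF : HasDerivAt (Wterm k)
      (((2 * (k:ℝ) + 1) * 2 * ((2 * (k:ℝ) + 2) * (2 * x + 2 * k + 1)) -
        (2 * (k:ℝ) + 1) * (2 * x + 2 * k + 2) * ((2 * (k:ℝ) + 2) * 2)) /
        ((2 * (k:ℝ) + 2) * (2 * x + 2 * k + 1)) ^ 2) x := hN.div hD hDne
  have hFne : Wterm k x ≠ 0 := (Wterm_pos hx).ne'
  have := hF.log hFne
  convert this using 1
  rw [Wterm]
  field_simp
  ring

lemma deriv_bound {k : ℕ} {x : ℝ} (hx : x ∈ Set.Ioo (-(1/4) : ℝ) (1/4)) :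
    ‖-2 / ((2 * x + 2 * (k:ℝ) + 1) * (2 * x + 2 * k + 2))‖ ≤ 4 / ((k:ℝ) + 1) ^ 2 := by
  have h1 := denom1_pos (k := k) hx
  have h2 := denom2_pos (k := k) hx
  have hk : (0:ℝ) ≤ (k:ℝ) := Nat.cast_nonneg k
  have ha : ((k:ℝ) + 1) / 2 ≤ 2 * x + 2 * k + 1 := by nlinarith [hx.1]
  have hb : ((k:ℝ) + 1) ≤ 2 * x + 2 * k + 2 := by nlinarith [hx.1]
  rw [Real.norm_eq_abs, abs_div, abs_neg, abs_two, abs_of_pos (by positivity)]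
  rw [div_le_div_iff₀ (by positivity) (by positivity)]
  nlinarith [mul_le_mul ha hb (by positivity) h1.le]

lemma summable_u : Summable (fun k : ℕ => (4 : ℝ) / ((k:ℝ) + 1) ^ 2) := by
  have := (Real.summable_one_div_nat_pow (p := 2)).mpr one_lt_two
  have := ((summable_nat_add_iff 1).mpr this).mul_left 4
  refine this.congr fun k => ?_
  push_cast
  ring

lemma Wterm_zero (k : ℕ) : Wterm k 0 = 1 := by
  rw [Wterm]
  have hk : (0:ℝ) ≤ (k:ℝ) := Nat.cast_nonneg k
  rw [mul_zero, zero_add, div_eq_one_iff_eq (by positivity)]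
  ring

lemma harm_real (n : ℕ) : ((harmonic n : ℚ) : ℝ) = ∑ i ∈ Finset.range n, ((i : ℝ) + 1)⁻¹ := by
  rw [harmonic]
  push_cast
  rfl

lemma partial_eq (n : ℕ) :
    ∑ k ∈ Finset.range n, (1 : ℝ) / ((2 * k + 1) * (2 * k + 2)) =
      ((harmonic (2 * n) : ℚ) : ℝ) - ((harmonic n : ℚ) : ℝ) := by
  induction n with
  | zero => simp
  | succ n ih =>
    rw [Finset.sum_range_succ, ih, show 2 * (n + 1) = 2 * n + 1 + 1 by ring,
      harmonic_succ, harmonic_succ, harmonic_succ]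
    push_cast
    have h1 : (2 * (n : ℝ) + 1) ≠ 0 := by positivity
    have h2 : (2 * (n : ℝ) + 2) ≠ 0 := by positivity
    have h3 : ((n : ℝ) + 1) ≠ 0 := by positivity
    field_simp
    ring

lemma hasSum_log2 :
    HasSum (fun k : ℕ => (1 : ℝ) / ((2 * k + 1) * (2 * k + 2))) (Real.log 2) := by
  have hsummable : Summable (fun k : ℕ => (1 : ℝ) / ((2 * k + 1) * (2 * k + 2))) := by
    have hb : Summable (fun k : ℕ => (1 : ℝ) / ((k : ℝ) + 1) ^ 2) := by
      have := (Real.summable_one_div_nat_pow (p := 2)).mpr one_lt_two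
      have := (summable_nat_add_iff 1).mpr this
      refine this.congr fun k => ?_
      push_cast
      ring
    refine Summable.of_nonneg_of_le (fun k => by positivity) (fun k => ?_) hb
    have hk : (0:ℝ) ≤ (k:ℝ) := Nat.cast_nonneg k
    rw [div_le_div_iff₀ (by positivity) (by positivity)]
    nlinarith
  rw [Summable.hasSum_iff_tendsto_nat hsummable]
  have key : ∀ n : ℕ, ∑ k ∈ Finset.range n, (1 : ℝ) / ((2 * k + 1) * (2 * k + 2)) =
      eulerMascheroniSeq (2 * n) - eulerMascheroniSeq n +
        (Real.log (2 * (n:ℝ) + 1) - Real.log ((n:ℝ) + 1)) := by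
    intro n
    rw [partial_eq, eulerMascheroniSeq, eulerMascheroniSeq]
    push_cast
    ring
  simp_rw [key]
  have h2n : Tendsto (fun n : ℕ => 2 * n) atTop atTop := by
    apply StrictMono.tendsto_atTop
    intro a b h; dsimp only; omega
  have t1 : Tendsto (fun n : ℕ => eulerMascheroniSeq (2 * n) - eulerMascheroniSeq n) atTop (𝓝 0) := by
    have := (tendsto_eulerMascheroniSeq.comp h2n).sub tendsto_eulerMascheroniSeq
    simpa using this
  have t2 : Tendsto (fun n : ℕ => Real.log (2 * (n:ℝ) + 1) - Real.log ((n:ℝ) + 1)) atTop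
      (𝓝 (Real.log 2)) := by
    have heq : ∀ n : ℕ, Real.log (2 * (n:ℝ) + 1) - Real.log ((n:ℝ) + 1) =
        Real.log ((2 * (n:ℝ) + 1) / ((n:ℝ) + 1)) := by
      intro n
      rw [Real.log_div (by positivity) (by positivity)]
    simp_rw [heq]
    have hq : Tendsto (fun n : ℕ => (2 * (n:ℝ) + 1) / ((n:ℝ) + 1)) atTop (𝓝 2) := by
      have : ∀ n : ℕ, (2 * (n:ℝ) + 1) / ((n:ℝ) + 1) = 2 - 1 / ((n:ℝ) + 1) := by
        intro n
        have : ((n:ℝ) + 1) ≠ 0 := by positivity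
        field_simp
        ring
      simp_rw [this]
      simpa using (tendsto_const_nhds : Tendsto (fun _ : ℕ => (2:ℝ)) atTop (𝓝 2)).sub tendsto_one_div_add_atTop_nhds_zero_nat
    exact ((Real.continuousAt_log (by norm_num)).tendsto.comp hq)
  simpa using t1.add t2

lemma summable_log_Wterm {x : ℝ} (hx : x ∈ Set.Ioo (-(1/4) : ℝ) (1/4)) :
    Summable (fun k : ℕ => Real.log (Wterm k x)) := by
  refine summable_of_summable_hasDerivAt_of_isPreconnected summable_u isOpen_Ioo
    (convex_Ioo _ _).isPreconnected
    (g := fun k y => Real.log (Wterm k y))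
    (g' := fun k y => -2 / ((2 * y + 2 * k + 1) * (2 * y + 2 * k + 2)))
    (fun k y hy => hasDerivAt_log_Wterm hy) (fun k y hy => deriv_bound hy)
    (y₀ := 0) (by norm_num) ?_ hx
  exact summable_zero.congr fun k => by simp [Wterm_zero]

lemma tprod_eq_exp {x : ℝ} (hx : x ∈ Set.Ioo (-(1/4) : ℝ) (1/4)) :
    (∏' k : ℕ, Wterm k x) = Real.exp (∑' k : ℕ, Real.log (Wterm k x)) := by
  have hs := (summable_log_Wterm hx).hasSum
  have hp := hs.rexp
  have hp' : HasProd (fun k => Wterm k x) (Real.exp (∑' k : ℕ, Real.log (Wterm k x))) := by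
    refine HasProd.congr_fun hp fun k => ?_
    simp [Function.comp, Real.exp_log (Wterm_pos hx)]
  exact hp'.tprod_eq

lemma hasDerivAt_sum_log :
    HasDerivAt (fun z => ∑' k : ℕ, Real.log (Wterm k z)) (-2 * Real.log 2) 0 := by
  have h0 : (0:ℝ) ∈ Set.Ioo (-(1/4) : ℝ) (1/4) := by norm_num
  have H := hasDerivAt_tsum_of_isPreconnected summable_u isOpen_Ioo
    (convex_Ioo _ _).isPreconnected
    (g := fun k y => Real.log (Wterm k y))
    (g' := fun k y => -2 / ((2 * y + 2 * k + 1) * (2 * y + 2 * k + 2)))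
    (fun k y hy => hasDerivAt_log_Wterm hy) (fun k y hy => deriv_bound hy)
    h0 (summable_zero.congr fun k => by simp [Wterm_zero]) h0
  convert H using 1
  all_goals try rfl
  have hS : HasSum (fun k : ℕ => -2 / ((2 * (0:ℝ) + 2 * k + 1) * (2 * (0:ℝ) + 2 * k + 2)))
      (-2 * Real.log 2) := by
    have := hasSum_log2.mul_left (-2)
    refine this.congr_fun fun k => ?_
    rw [mul_zero, zero_add]
    ring
  exact hS.tsum_eq.symm

theorem wallis_interpolation_deriv :
    (∏' k : ℕ, (((2 * k + 1) * (2 * (0 : ℝ) + 2 * k + 2)) /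
      ((2 * k + 2) * (2 * (0 : ℝ) + 2 * k + 1)))) = 1 ∧
    HasDerivAt (fun x : ℝ => ∏' k : ℕ,
        (((2 * k + 1) * (2 * x + 2 * k + 2)) / ((2 * k + 2) * (2 * x + 2 * k + 1)) : ℝ))
      (-2 * Real.log 2) 0 := by
  have h0 : (0:ℝ) ∈ Set.Ioo (-(1/4) : ℝ) (1/4) := by norm_num
  have hW : ∀ x : ℝ, (∏' k : ℕ,
      (((2 * k + 1) * (2 * x + 2 * k + 2)) / ((2 * k + 2) * (2 * x + 2 * k + 1)) : ℝ)) =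
      ∏' k : ℕ, Wterm k x := fun x => rfl
  constructor
  · rw [hW 0]
    rw [show (∏' k : ℕ, Wterm k 0) = ∏' _ : ℕ, (1:ℝ) from tprod_congr Wterm_zero, tprod_one]
  · have hsum0 : (∑' k : ℕ, Real.log (Wterm k 0)) = 0 := by
      rw [show (fun k : ℕ => Real.log (Wterm k 0)) = fun _ => (0:ℝ) from
        funext fun k => by rw [Wterm_zero, Real.log_one]]
      exact tsum_zero
    have hexp : HasDerivAt (fun z => Real.exp (∑' k : ℕ, Real.log (Wterm k z)))
        (-2 * Real.log 2) 0 := by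
      have := hasDerivAt_sum_log.exp
      rwa [hsum0, Real.exp_zero, one_mul] at this
    refine hexp.congr_of_eventuallyEq ?_
    filter_upwards [isOpen_Ioo.mem_nhds h0] with x hx
    rw [hW x, tprod_eq_exp hx]
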